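/- Let d ∈ ℕ and let C be a real-valued function on d×d complex matrices such that for all d×d density matrices: (i) C(η) ≥ 0; (ii) C is convex: for every finite family of density matrices η_i and weights w_i ≥ 0 with ∑_i w_i = 1, C(∑_i w_i·η_i) ≤ ∑_i w_i·C(η_i); (iii) C is monotone under selective incoherent measurements: for every finite family (M_j) of incoherent d×d Kraus operators with ∑_j M_jᴴM_j = I and every density matrix η, ∑_{j : p_j > 0} p_j·C(M_j η M_jᴴ / p_j) ≤ C(η), where p_j = Tr(M_j η M_jᴴ). Then for all d×d density matrices ρ, σ, every p > 0, and all finite families (K_n), (L_m) of incoherent Kraus operators with ∑_n K_nᴴK_n + ∑_m L_mᴴL_m = I and ∑_n K_n ρ K_nᴴ = p·σ, one has p·C(σ) ≤ C(ρ). (The optimal probability of a stochastic incoherent conversion from ρ to σ is bounded by C(ρ)/C(σ) for any coherence measure C.) -/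

import Mathlib

open Matrix BigOperators
open scoped Kronecker Classical ComplexOrder

/-- The qubit state with Bloch vector `(rx, ry, rz)`:
`ρ = (1/2)(I + rx σx + ry σy + rz σz)`. -/
noncomputable def blochState (rx ry rz : ℝ) : Matrix (Fin 2) (Fin 2) ℂ :=
  !![(1 + rz : ℂ)/2, ((rx : ℂ) - ry * Complex.I)/2;
     ((rx : ℂ) + ry * Complex.I)/2, (1 - rz : ℂ)/2]

/-- `K` is an incoherent Kraus operator: every column has at most one nonzero entry. -/
def IsIncoherentKraus {d : ℕ} (K : Matrix (Fin d) (Fin d) ℂ) : Prop :=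
  ∀ j i i', K i j ≠ 0 → K i' j ≠ 0 → i = i'

/-- `K` is a strictly incoherent Kraus operator: every row and every column
has at most one nonzero entry. -/
def IsSIKraus {d : ℕ} (K : Matrix (Fin d) (Fin d) ℂ) : Prop :=
  (∀ i j j', K i j ≠ 0 → K i j' ≠ 0 → j = j') ∧
  (∀ j i i', K i j ≠ 0 → K i' j ≠ 0 → i = i')

/-- Partial trace over the first (A) factor. -/
noncomputable def ptraceA {dA dB : ℕ} (X : Matrix (Fin dA × Fin dB) (Fin dA × Fin dB) ℂ) :
    Matrix (Fin dB) (Fin dB) ℂ :=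
  fun j j' => ∑ i, X (i, j) (i, j')

/-- Partial trace over the second (B) factor. -/
noncomputable def ptraceB {dA dB : ℕ} (X : Matrix (Fin dA × Fin dB) (Fin dA × Fin dB) ℂ) :
    Matrix (Fin dA) (Fin dA) ℂ :=
  fun i i' => ∑ j, X (i, j) (i', j)

/-- The completely dephasing map: keep the diagonal of `X`. -/
noncomputable def dephase {d : ℕ} (X : Matrix (Fin d) (Fin d) ℂ) : Matrix (Fin d) (Fin d) ℂ :=
  Matrix.diagonal X.diag

lemma psd_diag_nonneg {d : ℕ} {A : Matrix (Fin d) (Fin d) ℂ} (hA : A.PosSemidef) (i : Fin d) :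
    0 ≤ A i i := by
  have := hA.dotProduct_mulVec_nonneg (Pi.single i 1)
  simpa [dotProduct, Pi.single_apply] using this

lemma psd_trace_re_nonneg {d : ℕ} {A : Matrix (Fin d) (Fin d) ℂ} (hA : A.PosSemidef) :
    0 ≤ A.trace.re := by
  rw [Matrix.trace, Complex.re_sum]
  exact Finset.sum_nonneg fun i _ => (Complex.le_def.mp (psd_diag_nonneg hA i)).1

lemma psd_trace_eq_re {d : ℕ} {A : Matrix (Fin d) (Fin d) ℂ} (hA : A.PosSemidef) :
    A.trace = (A.trace.re : ℂ) := by
  have him : A.trace.im = 0 := by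
    rw [Matrix.trace, Complex.im_sum]
    exact Finset.sum_eq_zero fun i _ => ((Complex.le_def.mp (psd_diag_nonneg hA i)).2).symm
  apply Complex.ext <;> simp [him]

lemma psd_smul_real {d : ℕ} {c : ℝ} (hc : 0 ≤ c) {A : Matrix (Fin d) (Fin d) ℂ}
    (hA : A.PosSemidef) : ((c : ℂ) • A).PosSemidef := by
  refine Matrix.PosSemidef.of_dotProduct_mulVec_nonneg ?_ ?_
  · rw [Matrix.IsHermitian, conjTranspose_smul, hA.1.eq]
    simp [Complex.star_def]
  · intro x
    rw [Matrix.smul_mulVec, dotProduct_smul]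
    exact smul_nonneg (by exact_mod_cast hc) (hA.dotProduct_mulVec_nonneg x)

lemma psd_trace_zero {d : ℕ} {A : Matrix (Fin d) (Fin d) ℂ} (hA : A.PosSemidef)
    (h : A.trace = 0) : A = 0 := by
  exact hA.trace_eq_zero_iff.mp h

/-- For any coherence measure `C` (nonnegative, convex, monotone under selective
incoherent measurements), the probability `p` of any stochastic incoherent conversion
`ρ → p σ` obeys `p C(σ) ≤ C(ρ)`. -/
theorem coherence_measure_bounds_conversion_probability (d : ℕ)
    (C : Matrix (Fin d) (Fin d) ℂ → ℝ)
    (hnonneg : ∀ η : Matrix (Fin d) (Fin d) ℂ, η.PosSemidef → η.trace = 1 → 0 ≤ C η)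
    (hconvex : ∀ (N : ℕ) (w : Fin N → ℝ) (η : Fin N → Matrix (Fin d) (Fin d) ℂ),
      (∀ i, 0 ≤ w i) → (∑ i, w i = 1) →
      (∀ i, (η i).PosSemidef) → (∀ i, (η i).trace = 1) →
      C (∑ i, (w i : ℂ) • η i) ≤ ∑ i, w i * C (η i))
    (hmono : ∀ (N : ℕ) (M : Fin N → Matrix (Fin d) (Fin d) ℂ),
      (∀ j, IsIncoherentKraus (M j)) → (∑ j, (M j)ᴴ * M j = 1) →
      ∀ η : Matrix (Fin d) (Fin d) ℂ, η.PosSemidef → η.trace = 1 →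
      ∑ j ∈ Finset.univ.filter (fun j => 0 < (M j * η * (M j)ᴴ).trace.re),
          (M j * η * (M j)ᴴ).trace.re *
            C (((((M j * η * (M j)ᴴ).trace.re : ℝ) : ℂ))⁻¹ • (M j * η * (M j)ᴴ)) ≤ C η)
    (ρ σ : Matrix (Fin d) (Fin d) ℂ)
    (hρ : ρ.PosSemidef) (hρtr : ρ.trace = 1)
    (hσ : σ.PosSemidef) (hσtr : σ.trace = 1)
    (p : ℝ) (hp : 0 < p)
    (n m : ℕ) (K : Fin n → Matrix (Fin d) (Fin d) ℂ) (L : Fin m → Matrix (Fin d) (Fin d) ℂ)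
    (hK : ∀ i, IsIncoherentKraus (K i)) (hL : ∀ j, IsIncoherentKraus (L j))
    (hcomplete : ∑ i, (K i)ᴴ * K i + ∑ j, (L j)ᴴ * L j = 1)
    (hconv : ∑ i, K i * ρ * (K i)ᴴ = (p : ℂ) • σ) :
    p * C σ ≤ C ρ := by
  -- abbreviations
  set X : Fin n → Matrix (Fin d) (Fin d) ℂ := fun i => K i * ρ * (K i)ᴴ with hXdef
  set q : Fin n → ℝ := fun i => (X i).trace.re with hqdef
  have hXpsd : ∀ i, (X i).PosSemidef := fun i => hρ.mul_mul_conjTranspose_same (K i)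
  have hq0 : ∀ i, 0 ≤ q i := fun i => psd_trace_re_nonneg (hXpsd i)
  have hXtr : ∀ i, (X i).trace = (q i : ℂ) := fun i => psd_trace_eq_re (hXpsd i)
  -- ∑ q = p
  have hsumX : (∑ i, X i).trace = (p : ℂ) := by
    rw [hconv, Matrix.trace_smul, hσtr, smul_eq_mul, mul_one]
  have hsumq : ∑ i, q i = p := by
    have : ((∑ i, q i : ℝ) : ℂ) = (p : ℂ) := by
      push_cast
      rw [← hsumX, Matrix.trace_sum]
      exact Finset.sum_congr rfl fun i _ => (hXtr i).symm
    exact_mod_cast this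
  -- states for positive q
  have hstate_psd : ∀ i, 0 < q i → (((q i : ℂ))⁻¹ • X i).PosSemidef := by
    intro i hi
    rw [show ((q i : ℂ))⁻¹ = (((q i)⁻¹ : ℝ) : ℂ) by push_cast; ring]
    exact psd_smul_real (inv_nonneg.mpr (hq0 i)) (hXpsd i)
  have hstate_tr : ∀ i, 0 < q i → (((q i : ℂ))⁻¹ • X i).trace = 1 := by
    intro i hi
    rw [Matrix.trace_smul, hXtr i, smul_eq_mul]
    exact inv_mul_cancel₀ (by exact_mod_cast hi.ne')
  -- convexity step
  set w : Fin n → ℝ := fun i => q i / p with hwdef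
  set η' : Fin n → Matrix (Fin d) (Fin d) ℂ :=
    fun i => if 0 < q i then ((q i : ℂ))⁻¹ • X i else σ with hηdef
  have hη'psd : ∀ i, (η' i).PosSemidef := by
    intro i; simp only [hηdef]; split
    · exact hstate_psd i ‹_›
    · exact hσ
  have hη'tr : ∀ i, (η' i).trace = 1 := by
    intro i; simp only [hηdef]; split
    · exact hstate_tr i ‹_›
    · exact hσtr
  have hcomb : ∑ i, ((w i : ℝ) : ℂ) • η' i = σ := by
    have step : ∀ i, ((w i : ℝ) : ℂ) • η' i = ((p⁻¹ : ℝ) : ℂ) • X i := by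
      intro i
      by_cases hi : 0 < q i
      · simp only [hηdef, if_pos hi, hwdef, smul_smul]
        congr 1
        have hqne : ((q i : ℝ) : ℂ) ≠ 0 := by exact_mod_cast hi.ne'
        have hpne : ((p : ℝ) : ℂ) ≠ 0 := by exact_mod_cast hp.ne'
        push_cast
        field_simp
      · have hq : q i = 0 := le_antisymm (not_lt.mp hi) (hq0 i)
        have hX0 : X i = 0 := psd_trace_zero (hXpsd i) (by rw [hXtr i, hq]; simp)
        simp [hwdef, hq, hX0]
    rw [Finset.sum_congr rfl fun i _ => step i, ← Finset.smul_sum, hconv, smul_smul]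
    rw [show ((p⁻¹ : ℝ) : ℂ) * (p : ℂ) = 1 by
      push_cast; exact inv_mul_cancel₀ (by exact_mod_cast hp.ne')]
    simp
  have hCσ : C σ ≤ ∑ i, w i * C (η' i) := by
    have := hconvex n w η' (fun i => div_nonneg (hq0 i) hp.le)
      (by rw [← Finset.sum_div, hsumq, div_self hp.ne']) hη'psd hη'tr
    rwa [hcomb] at this
  -- key intermediate: p * C σ ≤ ∑ i, ite (0 < q i) (q i * C (((q i:ℂ))⁻¹ • X i)) 0
  have hkey : p * C σ ≤ ∑ i, (if 0 < q i then q i * C (((q i : ℂ))⁻¹ • X i) else 0) := by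
    calc p * C σ ≤ p * ∑ i, w i * C (η' i) := by
            exact mul_le_mul_of_nonneg_left hCσ hp.le
      _ = ∑ i, p * (w i * C (η' i)) := by rw [Finset.mul_sum]
      _ = ∑ i, (if 0 < q i then q i * C (((q i : ℂ))⁻¹ • X i) else 0) := by
            refine Finset.sum_congr rfl fun i _ => ?_
            by_cases hi : 0 < q i
            · rw [if_pos hi]
              simp only [hηdef, if_pos hi, hwdef]
              field_simp
            · have hq : q i = 0 := le_antisymm (not_lt.mp hi) (hq0 i)
              rw [if_neg hi]
              simp [hwdef, hq]
  -- monotonicity with combined family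
  set M : Fin (n + m) → Matrix (Fin d) (Fin d) ℂ := Fin.append K L with hMdef
  have hMK : ∀ j, IsIncoherentKraus (M j) := by
    intro j
    refine Fin.addCases (fun i => ?_) (fun i => ?_) j
    · simpa [hMdef, Fin.append_left] using hK i
    · simpa [hMdef, Fin.append_right] using hL i
  have hMcomp : ∑ j, (M j)ᴴ * M j = 1 := by
    rw [Fin.sum_univ_add]
    simpa [hMdef, Fin.append_left, Fin.append_right] using hcomplete
  have Hmono := hmono (n + m) M hMK hMcomp ρ hρ hρtr
  rw [Finset.sum_filter] at Hmono
  rw [Fin.sum_univ_add] at Hmono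
  refine le_trans ?_ Hmono
  have h1 : ∑ i : Fin n,
      (if 0 < (M (Fin.castAdd m i) * ρ * (M (Fin.castAdd m i))ᴴ).trace.re then
        (M (Fin.castAdd m i) * ρ * (M (Fin.castAdd m i))ᴴ).trace.re *
          C ((((M (Fin.castAdd m i) * ρ * (M (Fin.castAdd m i))ᴴ).trace.re : ℂ))⁻¹ •
            (M (Fin.castAdd m i) * ρ * (M (Fin.castAdd m i))ᴴ)) else 0)
      = ∑ i, (if 0 < q i then q i * C (((q i : ℂ))⁻¹ • X i) else 0) := by
    refine Finset.sum_congr rfl fun i _ => ?_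
    simp only [hMdef, Fin.append_left]
    rfl
  have h2 : 0 ≤ ∑ i : Fin m,
      (if 0 < (M (Fin.natAdd n i) * ρ * (M (Fin.natAdd n i))ᴴ).trace.re then
        (M (Fin.natAdd n i) * ρ * (M (Fin.natAdd n i))ᴴ).trace.re *
          C ((((M (Fin.natAdd n i) * ρ * (M (Fin.natAdd n i))ᴴ).trace.re : ℂ))⁻¹ •
            (M (Fin.natAdd n i) * ρ * (M (Fin.natAdd n i))ᴴ)) else 0) := by
    refine Finset.sum_nonneg fun i _ => ?_
    set Y := M (Fin.natAdd n i) * ρ * (M (Fin.natAdd n i))ᴴ with hY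
    have hYpsd : Y.PosSemidef := hρ.mul_mul_conjTranspose_same _
    by_cases hy : 0 < Y.trace.re
    · rw [if_pos hy]
      refine mul_nonneg hy.le (hnonneg _ ?_ ?_)
      · rw [show ((Y.trace.re : ℝ) : ℂ)⁻¹ = (((Y.trace.re)⁻¹ : ℝ) : ℂ) by push_cast; ring]
        exact psd_smul_real (inv_nonneg.mpr hy.le) hYpsd
      · rw [Matrix.trace_smul, psd_trace_eq_re hYpsd, smul_eq_mul]
        exact inv_mul_cancel₀ (by exact_mod_cast hy.ne')
    · rw [if_neg hy]
  calc p * C σ ≤ ∑ i, (if 0 < q i then q i * C (((q i : ℂ))⁻¹ • X i) else 0) := hkey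
    _ ≤ _ := by rw [← h1]; exact le_add_of_nonneg_right h2
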